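/- Let s > 0, m ∈ (0,1], S = s^m/(m Γ(m)), and s₁ = (2 m Γ(m)/d)^{1/m}. The eigenvalues of the Jacobian of the discretized map F at the fixed point (0,0) are ξ₁ = 1 + r S and ξ₂ = 1 - d S, and: ξ₁ > 1 for every s > 0; |ξ₂| < 1 if and only if 0 < s < s₁; |ξ₂| > 1 if and only if s > s₁; and ξ₂ = -1 if and only if s = s₁. -/

import Mathlib

/-- Eigenvalues of the Jacobian of the discretized map F at (0,0) are
ξ₁ = 1 + rS > 1 and ξ₂ = 1 - dS; |ξ₂| < 1 iff s < s₁, |ξ₂| > 1 iff s > s₁,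
and ξ₂ = -1 iff s = s₁, where s₁ = (2mΓ(m)/d)^(1/m). -/
theorem discretized_origin_eigenvalues
    (r K α h d θ c s m S s₁ ξ₁ ξ₂ : ℝ)
    (hr : 0 < r) (hK : 0 < K) (hα : 0 < α) (hh : 0 < h) (hd : 0 < d)
    (hθ0 : 0 < θ) (hθlt : θ < 1) (hc0 : 0 < c) (hclt : c < 1)
    (hs : 0 < s) (hm0 : 0 < m) (hm1 : m ≤ 1)
    (hS : S = s ^ m / (m * Real.Gamma m))
    (hs₁ : s₁ = (2 * m * Real.Gamma m / d) ^ (1 / m))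
    (hξ1 : ξ₁ = 1 + r * S) (hξ2 : ξ₂ = 1 - d * S) :
    ξ₁ > 1 ∧ (|ξ₂| < 1 ↔ s < s₁) ∧ (|ξ₂| > 1 ↔ s > s₁) ∧ (ξ₂ = -1 ↔ s = s₁) := by
  have hΓ : 0 < Real.Gamma m := Real.Gamma_pos_of_pos hm0
  have hG : 0 < m * Real.Gamma m := mul_pos hm0 hΓ
  have hsm : 0 < s ^ m := Real.rpow_pos_of_pos hs m
  have hSpos : 0 < S := by rw [hS]; positivity
  have hA : 0 < 2 * m * Real.Gamma m / d := by positivity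
  have hs₁pos : 0 < s₁ := by rw [hs₁]; exact Real.rpow_pos_of_pos hA _
  have hs₁m : s₁ ^ m = 2 * m * Real.Gamma m / d := by
    rw [hs₁, ← Real.rpow_mul hA.le, one_div, inv_mul_cancel₀ hm0.ne', Real.rpow_one]
  -- key equivalence: d * S < 2 ↔ s < s₁
  have hdS : d * S = d * s ^ m / (m * Real.Gamma m) := by rw [hS]; ring
  have key : d * S < 2 ↔ s < s₁ := by
    rw [hdS, div_lt_iff₀ hG, ← Real.rpow_lt_rpow_iff hs.le hs₁pos.le hm0, hs₁m]
    rw [lt_div_iff₀ hd]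
    constructor <;> intro hx <;> nlinarith
  have keyeq : d * S = 2 ↔ s = s₁ := by
    rw [hdS, div_eq_iff hG.ne']
    constructor
    · intro hx
      have : s ^ m = s₁ ^ m := by rw [hs₁m]; field_simp; nlinarith
      by_contra hne
      rcases lt_or_gt_of_ne hne with h' | h'
      · exact absurd this (ne_of_lt (Real.rpow_lt_rpow hs.le h' hm0))
      · exact absurd this.symm (ne_of_lt (Real.rpow_lt_rpow hs₁pos.le h' hm0))
    · intro hx
      subst hx
      rw [hs₁m]; field_simp
  have hdSpos : 0 < d * S := mul_pos hd hSpos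
  refine ⟨?_, ?_, ?_, ?_⟩
  · rw [hξ1]; nlinarith
  · rw [hξ2, abs_lt]
    constructor
    · rintro ⟨h1, h2⟩; exact key.mp (by linarith)
    · intro hx; have := key.mpr hx; constructor <;> linarith
  · rw [hξ2]
    rw [show |1 - d * S| = |d * S - 1| by rw [abs_sub_comm]]
    constructor
    · intro hx
      rcases abs_lt.not.mp (not_lt.mpr hx.le) with _
      by_contra hns
      have hle : s ≤ s₁ := not_lt.mp hns
      rcases lt_or_eq_of_le hle with h' | h'
      · have := key.mpr h'
        have habs : |d * S - 1| < 1 := abs_lt.mpr ⟨by linarith, by linarith⟩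
        linarith
      · have := keyeq.mpr h'
        have : |d * S - 1| = 1 := by rw [this]; norm_num
        linarith
    · intro hx
      have h2 : 2 < d * S := by
        by_contra hle
        push_neg at hle
        rcases lt_or_eq_of_le hle with h' | h'
        · exact absurd (key.mp h') (not_lt.mpr hx.le)
        · exact absurd (keyeq.mp h') (ne_of_gt hx)
      rw [abs_of_pos (by linarith)]; linarith
  · rw [hξ2]
    constructor
    · intro hx; exact keyeq.mp (by linarith)
    · intro hx; have := keyeq.mpr hx; linarith
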